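/- Let Δ = (Σ, β) be a complete non-singular topological fan of dimension n with vertex set [m], let U(Σ) = ⋃_{I∈Σ} U(I) ⊆ ℂᵐ where U(I) = {z ∈ ℂᵐ : zᵢ ≠ 0 for all i ∉ I}, and let λ(h) = ∏ₖ λ_{βₖ}(hₖ). For each I ∈ Σ with |I| = n, the map φ̃_I : U(I) → ℂᴵ given by φ̃_I(z)ᵢ = ∏ₖ zₖ^{⟨αᵢᴵ, βₖ⟩} (i ∈ I) is invariant under the action of Ker λ, and the induced map U(I)/Ker λ → ℂᴵ is a bijection (indeed a homeomorphism). -/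

import Mathlib

noncomputable section

open Complex Finset

/-- `g^μ` for `μ = (b + c·i, v) ∈ ℂ × ℤ`: `|g|^(b+ci) · (g/|g|)^v`. -/
noncomputable def cpw (b c : ℝ) (v : ℤ) (g : ℂ) : ℂ :=
  ((‖g‖ : ℂ) ^ ((b : ℂ) + (c : ℂ) * Complex.I)) * (g / (‖g‖ : ℂ)) ^ v

/-- `g^μ` where `μ` is encoded as a triple `(b, c, v) : ℝ × ℝ × ℤ`. -/
noncomputable def cpwT (t : ℝ × ℝ × ℤ) (g : ℂ) : ℂ := cpw t.1 t.2.1 t.2.2 g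

/-- The product `μ₂μ₁ = (b₁b₂, b₁c₂ + c₁v₂, v₁v₂)` in the ring `𝓡 ≅ ℂ × ℤ`. -/
def rmul (μ₂ μ₁ : ℝ × ℝ × ℤ) : ℝ × ℝ × ℤ :=
  (μ₁.1 * μ₂.1, μ₁.1 * μ₂.2.1 + μ₁.2.1 * (μ₂.2.2 : ℝ), μ₁.2.2 * μ₂.2.2)

/-- The identity element of `𝓡`. -/
def rone : ℝ × ℝ × ℤ := (1, 0, 1)

/-- `⟨α, β⟩ = Σₖ αᵏ βᵏ ∈ 𝓡`. -/
def rinner {n : ℕ} (α β : Fin n → ℝ × ℝ × ℤ) : ℝ × ℝ × ℤ :=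
  ∑ k, rmul (α k) (β k)

/-- `χ^α(g₁, …, gₙ) = ∏ₖ gₖ^{αᵏ}`. -/
noncomputable def chi {n : ℕ} (α : Fin n → ℝ × ℝ × ℤ) (g : Fin n → ℂ) : ℂ :=
  ∏ k, cpwT (α k) (g k)

/-- The cone spanned by the vectors `b i`, `i ∈ I`. -/
def coneOf {n : ℕ} (m : ℕ) (b : Fin m → (Fin n → ℝ)) (I : Finset (Fin m)) :
    Set (Fin n → ℝ) :=
  {x | ∃ r : Fin m → ℝ, (∀ i, 0 ≤ r i) ∧ (∀ i ∉ I, r i = 0) ∧ x = ∑ i, r i • b i}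

/-- A complete non-singular (simplicial) topological fan of dimension `n` on the vertex set
`[m]`: an abstract simplicial complex `cx` on `Fin m` together with
`β : Fin m → 𝓡ⁿ = ℂⁿ × ℤⁿ`, `β i = (bᵢ + i·cᵢ, vᵢ)` (encoded componentwise by triples in
`ℝ × ℝ × ℤ`), such that the cones `∠b_I`, `I ∈ cx`, form a complete ordinary simplicial fan
and each `{vᵢ}_{i ∈ I}` is part of a `ℤ`-basis of `ℤⁿ` (rows of a unimodular matrix). -/
structure CompleteNonsingularTopFan (n m : ℕ) where
  cx : Finset (Finset (Fin m))
  β : Fin m → Fin n → ℝ × ℝ × ℤ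
  down_closed : ∀ I ∈ cx, ∀ J ⊆ I, J ∈ cx
  vertices : ∀ i : Fin m, {i} ∈ cx
  indep : ∀ I ∈ cx, LinearIndependent ℝ (fun i : I => fun k => (β i k).1)
  cone_inter : ∀ I ∈ cx, ∀ J ∈ cx,
    coneOf m (fun i k => (β i k).1) I ∩ coneOf m (fun i k => (β i k).1) J =
      coneOf m (fun i k => (β i k).1) (I ∩ J)
  complete : (⋃ I ∈ cx, coneOf m (fun i k => (β i k).1) I) = Set.univ
  nonsingular : ∀ I ∈ cx, ∃ (C : Matrix (Fin n) (Fin n) ℤ) (ρ : Fin m → Fin n),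
    IsUnit C.det ∧ Set.InjOn ρ (I : Set (Fin m)) ∧ ∀ i ∈ I, ∀ k, C (ρ i) k = (β i k).2.2

/-- The homomorphism `λ : (ℂ*)ᵐ → (ℂ*)ⁿ`, `λ(h₁,…,hₘ) = ∏ₖ λ_{βₖ}(hₖ)`, written on
`j`-th coordinates: `λ(h)ⱼ = ∏ₖ hₖ^{βₖʲ}`. -/
noncomputable def lamMap {n m : ℕ} (β : Fin m → Fin n → ℝ × ℝ × ℤ) (h : Fin m → ℂ) :
    Fin n → ℂ :=
  fun j => ∏ k, cpwT (β k j) (h k)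

/-- The open set `U(I) = {z ∈ ℂᵐ : zₖ ≠ 0 for k ∉ I}`. -/
def USet {m : ℕ} (I : Finset (Fin m)) : Set (Fin m → ℂ) := {z | ∀ k ∉ I, z k ≠ 0}

/-- The map `φ̃_I : U(I) → ℂᴵ`, `φ̃_I(z)ᵢ = ∏ₖ zₖ^{⟨αᵢᴵ,βₖ⟩}`. -/
noncomputable def phiMap {n m : ℕ} (β αI : Fin m → Fin n → ℝ × ℝ × ℤ)
    (I : Finset (Fin m)) (z : Fin m → ℂ) : {i // i ∈ I} → ℂ :=
  fun i => ∏ k, cpwT (rinner (αI i.1) (β k)) (z k)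

lemma abs_pos' {g : ℂ} (hg : g ≠ 0) : (0:ℝ) < ‖g‖ := norm_pos_iff.mpr hg

lemma cpw_polar (b c : ℝ) (v : ℤ) {r : ℝ} (hr : 0 < r) {u : ℂ} (hu : ‖u‖ = 1) :
    cpw b c v ((r : ℂ) * u) =
      Complex.exp (((b : ℂ) + c * Complex.I) * Real.log r) * u ^ v := by
  have hu0 : u ≠ 0 := by
    intro h; rw [h] at hu; simp at hu
  have habs : ‖(r:ℂ) * u‖ = r := by
    rw [norm_mul, hu, Complex.norm_real, Real.norm_eq_abs, abs_of_pos hr, mul_one]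
  have hr0 : ((r:ℂ)) ≠ 0 := by exact_mod_cast hr.ne'
  unfold cpw
  rw [habs]
  congr 1
  · rw [Complex.cpow_def_of_ne_zero hr0, ← Complex.ofReal_log hr.le, mul_comm]
  · congr 1
    field_simp

lemma uabs {g : ℂ} (hg : g ≠ 0) : ‖g / (‖g‖ : ℂ)‖ = 1 := by
  rw [norm_div, Complex.norm_real, Real.norm_eq_abs, abs_of_pos (abs_pos' hg), div_self (abs_pos' hg).ne']

lemma polar_decomp {g : ℂ} (hg : g ≠ 0) :
    g = ((‖g‖ : ℝ) : ℂ) * (g / (‖g‖ : ℂ)) := by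
  have : ((‖g‖ : ℝ) : ℂ) ≠ 0 := by exact_mod_cast (abs_pos' hg).ne'
  field_simp

lemma cpw_eq {g : ℂ} (hg : g ≠ 0) (b c : ℝ) (v : ℤ) :
    cpw b c v g = Complex.exp (((b : ℂ) + c * Complex.I) * Real.log (‖g‖)) *
      (g / (‖g‖ : ℂ)) ^ v := by
  conv_lhs => rw [polar_decomp hg]
  rw [cpw_polar b c v (abs_pos' hg) (uabs hg)]

lemma cpwT_eq {g : ℂ} (hg : g ≠ 0) (t : ℝ × ℝ × ℤ) :
    cpwT t g = Complex.exp (((t.1 : ℂ) + t.2.1 * Complex.I) * Real.log (‖g‖)) *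
      (g / (‖g‖ : ℂ)) ^ t.2.2 := cpw_eq hg _ _ _

lemma cpwT_one (t : ℝ × ℝ × ℤ) : cpwT t 1 = 1 := by
  rw [cpwT_eq one_ne_zero]; simp

lemma cpwT_ne_zero {g : ℂ} (hg : g ≠ 0) (t : ℝ × ℝ × ℤ) : cpwT t g ≠ 0 := by
  rw [cpwT_eq hg]
  exact mul_ne_zero (Complex.exp_ne_zero _)
    (zpow_ne_zero _ (div_ne_zero hg (by exact_mod_cast (abs_pos' hg).ne')))

lemma cpwT_rone (g : ℂ) : cpwT rone g = g := by
  by_cases hg : g = 0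
  · subst hg
    simp [cpwT, cpw, rone]
  · rw [cpwT_eq hg]
    unfold rone
    simp only [Complex.ofReal_one, Complex.ofReal_zero, zero_mul, add_zero, one_mul, zpow_one]
    rw [← Complex.ofReal_exp, Real.exp_log (abs_pos' hg), mul_comm, div_mul_cancel₀ g
      (by exact_mod_cast (abs_pos' hg).ne' : (‖g‖ : ℂ) ≠ 0)]

lemma cpwT_zero_exp (g : ℂ) : cpwT 0 g = 1 := by
  unfold cpwT cpw
  norm_num

lemma cpwT_mul {g h : ℂ} (hg : g ≠ 0) (hh : h ≠ 0) (t : ℝ × ℝ × ℤ) :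
    cpwT t (g * h) = cpwT t g * cpwT t h := by
  rw [cpwT_eq hg, cpwT_eq hh, cpwT_eq (mul_ne_zero hg hh)]
  rw [norm_mul, Real.log_mul (abs_pos' hg).ne' (abs_pos' hh).ne']
  rw [Complex.ofReal_add, mul_add, Complex.exp_add]
  have : g * h / ((‖g‖ * ‖h‖ : ℝ) : ℂ) =
      (g / (‖g‖ : ℂ)) * (h / (‖h‖ : ℂ)) := by
    push_cast; ring
  rw [this, mul_zpow]
  ring

lemma cpwT_add {g : ℂ} (hg : g ≠ 0) (s t : ℝ × ℝ × ℤ) :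
    cpwT (s + t) g = cpwT s g * cpwT t g := by
  rw [cpwT_eq hg, cpwT_eq hg, cpwT_eq hg]
  have h1 : (s + t).1 = s.1 + t.1 := rfl
  have h2 : (s + t).2.1 = s.2.1 + t.2.1 := rfl
  have h3 : (s + t).2.2 = s.2.2 + t.2.2 := rfl
  rw [h1, h2, h3, zpow_add₀ (div_ne_zero hg (by exact_mod_cast (abs_pos' hg).ne'))]
  have key : Complex.exp ((((s.1 + t.1 : ℝ) : ℂ) + ((s.2.1 + t.2.1 : ℝ) : ℂ) * Complex.I) *
        (Real.log (‖g‖) : ℂ)) =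
      Complex.exp (((s.1 : ℂ) + (s.2.1 : ℂ) * Complex.I) * (Real.log (‖g‖) : ℂ)) *
      Complex.exp (((t.1 : ℂ) + (t.2.1 : ℂ) * Complex.I) * (Real.log (‖g‖) : ℂ)) := by
    rw [← Complex.exp_add]
    congr 1
    push_cast
    ring
  rw [key]
  ring

lemma cpwT_neg {g : ℂ} (hg : g ≠ 0) (t : ℝ × ℝ × ℤ) :
    cpwT (-t) g = (cpwT t g)⁻¹ := by
  have h := cpwT_add hg (-t) t
  rw [neg_add_cancel, cpwT_zero_exp] at h
  field_simp [cpwT_ne_zero hg t] at h ⊢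
  rw [h]

lemma cpwT_inv {g : ℂ} (hg : g ≠ 0) (t : ℝ × ℝ × ℤ) :
    cpwT t g⁻¹ = (cpwT t g)⁻¹ := by
  have h : cpwT t g⁻¹ * cpwT t g = 1 := by
    rw [← cpwT_mul (inv_ne_zero hg) hg, inv_mul_cancel₀ hg, cpwT_one]
  exact eq_inv_of_mul_eq_one_left h

lemma cpwT_comp {g : ℂ} (hg : g ≠ 0) (s t : ℝ × ℝ × ℤ) :
    cpwT (rmul s t) g = cpwT s (cpwT t g) := by
  set L := Real.log (‖g‖) with hL
  set u := g / (‖g‖ : ℂ) with huu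
  have hu : ‖u‖ = 1 := uabs hg
  have hu0 : u ≠ 0 := by intro h; rw [h] at hu; simp at hu
  have h1 : cpwT t g = ((Real.exp (t.1 * L) : ℝ) : ℂ) *
      (Complex.exp (((t.2.1 * L : ℝ) : ℂ) * Complex.I) * u ^ t.2.2) := by
    rw [cpwT_eq hg, Complex.ofReal_exp, ← huu, ← hL, ← mul_assoc, ← Complex.exp_add]
    congr 2
    push_cast
    ring
  have habs1 : ‖Complex.exp (((t.2.1 * L : ℝ) : ℂ) * Complex.I) * u ^ t.2.2‖ = 1 := by
    rw [norm_mul, Complex.norm_exp, norm_zpow, hu, one_zpow, mul_one]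
    simp
  rw [h1]
  show cpwT (rmul s t) g = cpw s.1 s.2.1 s.2.2 _
  rw [cpw_polar s.1 s.2.1 s.2.2 (Real.exp_pos _) habs1, Real.log_exp, mul_zpow,
    ← Complex.exp_int_mul, ← zpow_mul, cpwT_eq hg, ← huu, ← hL, ← mul_assoc, ← Complex.exp_add]
  have hv : (rmul s t).2.2 = t.2.2 * s.2.2 := rfl
  rw [hv]
  congr 1
  simp only [rmul]
  push_cast
  ring

lemma cpwT_sum {ι : Type*} (s : Finset ι) (f : ι → ℝ × ℝ × ℤ) {g : ℂ} (hg : g ≠ 0) :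
    cpwT (∑ k ∈ s, f k) g = ∏ k ∈ s, cpwT (f k) g := by
  induction s using Finset.cons_induction with
  | empty => simpa using cpwT_zero_exp g
  | cons a s ha ih => rw [Finset.sum_cons, Finset.prod_cons, cpwT_add hg, ih]

lemma cpwT_prod {ι : Type*} (s : Finset ι) (f : ι → ℂ) (hf : ∀ k ∈ s, f k ≠ 0)
    (t : ℝ × ℝ × ℤ) : cpwT t (∏ k ∈ s, f k) = ∏ k ∈ s, cpwT t (f k) := by
  induction s using Finset.cons_induction with
  | empty => simpa using cpwT_one t
  | cons a s ha ih =>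
      rw [Finset.prod_cons, Finset.prod_cons,
        cpwT_mul (hf a (Finset.mem_cons_self a s))
          (Finset.prod_ne_zero_iff.2 fun k hk => hf k (Finset.mem_cons_of_mem hk)),
        ih fun k hk => hf k (Finset.mem_cons_of_mem hk)]

lemma cpwT_continuousAt (t : ℝ × ℝ × ℤ) {g : ℂ} (hg : g ≠ 0) : ContinuousAt (cpwT t) g := by
  have habs : (0:ℝ) < ‖g‖ := abs_pos' hg
  have hca : ContinuousAt (fun z : ℂ => ((‖z‖ : ℝ) : ℂ)) g :=
    (Complex.continuous_ofReal.comp continuous_norm).continuousAt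
  have h1 : ContinuousAt (fun z : ℂ =>
      ((‖z‖ : ℝ) : ℂ) ^ ((t.1 : ℂ) + (t.2.1 : ℂ) * Complex.I)) g := by
    refine ContinuousAt.comp (g := fun x : ℂ => x ^ ((t.1 : ℂ) + (t.2.1 : ℂ) * Complex.I))
      (continuousAt_cpow_const ?_) hca
    left
    simpa using habs
  have h2 : ContinuousAt (fun z : ℂ => (z / ((‖z‖ : ℝ) : ℂ)) ^ t.2.2) g := by
    refine ContinuousAt.comp (g := fun x : ℂ => x ^ t.2.2)
      (continuousAt_zpow₀ _ _ (Or.inl (div_ne_zero hg (by exact_mod_cast habs.ne')))) ?_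
    exact continuousAt_id.div hca (by exact_mod_cast habs.ne')
  exact h1.mul h2

lemma rmul_rone (x : ℝ × ℝ × ℤ) : rmul x rone = x := by
  simp [rmul, rone]

lemma rone_rmul (x : ℝ × ℝ × ℤ) : rmul rone x = x := by
  simp [rmul, rone]

lemma rmul_zero (x : ℝ × ℝ × ℤ) : rmul x 0 = 0 := by
  simp [rmul]

lemma zero_rmul (x : ℝ × ℝ × ℤ) : rmul 0 x = 0 := by
  simp [rmul]

lemma rmul_assoc (s a b : ℝ × ℝ × ℤ) : rmul (rmul s a) b = rmul s (rmul a b) := by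
  refine Prod.ext ?_ (Prod.ext ?_ ?_)
  · simp [rmul]; ring
  · simp [rmul]; ring
  · simp [rmul]; ring

lemma rmul_sum {ι : Type*} (s : Finset ι) (x : ℝ × ℝ × ℤ) (f : ι → ℝ × ℝ × ℤ) :
    rmul x (∑ i ∈ s, f i) = ∑ i ∈ s, rmul x (f i) := by
  induction s using Finset.cons_induction with
  | empty => simpa using rmul_zero x
  | cons a s ha ih =>
      rw [Finset.sum_cons, Finset.sum_cons, ← ih]
      refine Prod.ext ?_ (Prod.ext ?_ ?_)
      · simp [rmul]; ring
      · simp [rmul]; ring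
      · simp [rmul]; ring

lemma sum_rmul {ι : Type*} (s : Finset ι) (x : ℝ × ℝ × ℤ) (f : ι → ℝ × ℝ × ℤ) :
    rmul (∑ i ∈ s, f i) x = ∑ i ∈ s, rmul (f i) x := by
  induction s using Finset.cons_induction with
  | empty => simpa using zero_rmul x
  | cons a s ha ih =>
      rw [Finset.sum_cons, Finset.sum_cons, ← ih]
      refine Prod.ext ?_ (Prod.ext ?_ ?_)
      · simp [rmul]; ring
      · simp [rmul]; ring
      · simp [rmul]; ring

lemma dual_comm {n m : ℕ} (I : Finset (Fin m)) (hcard : I.card = n)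
    (α βm : Fin m → Fin n → ℝ × ℝ × ℤ)
    (hdual : ∀ i ∈ I, ∀ i' ∈ I,
      (∑ l, rmul (α i l) (βm i' l)) = if i = i' then rone else 0) :
    ∀ j l, (∑ i ∈ I, rmul (βm i j) (α i l)) = if j = l then rone else 0 := by
  classical
  let e : Fin n ≃ {i // i ∈ I} := (finCongr hcard.symm).trans I.equivFin.symm
  set Ab : Matrix (Fin n) (Fin n) ℝ := fun i l => (α (e i) l).1 with hAb
  set Ac : Matrix (Fin n) (Fin n) ℝ := fun i l => (α (e i) l).2.1 with hAc
  set Avz : Matrix (Fin n) (Fin n) ℤ := fun i l => (α (e i) l).2.2 with hAvz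
  set Av : Matrix (Fin n) (Fin n) ℝ := fun i l => ((α (e i) l).2.2 : ℝ) with hAv
  set Bb : Matrix (Fin n) (Fin n) ℝ := fun l i => (βm (e i) l).1 with hBb
  set Bc : Matrix (Fin n) (Fin n) ℝ := fun l i => (βm (e i) l).2.1 with hBc
  set Bvz : Matrix (Fin n) (Fin n) ℤ := fun l i => (βm (e i) l).2.2 with hBvz
  set Bv : Matrix (Fin n) (Fin n) ℝ := fun l i => ((βm (e i) l).2.2 : ℝ) with hBv
  have hd : ∀ i i' : Fin n,
      (∑ l, rmul (α (e i) l) (βm (e i') l)) = if i = i' then rone else 0 := by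
    intro i i'
    rw [hdual _ (e i).2 _ (e i').2]
    congr 1
    simp [Subtype.ext_iff.symm, e.injective.eq_iff]
  have hABb : Ab * Bb = 1 := by
    ext i i'
    have h1 : (∑ l, (rmul (α (e i) l) (βm (e i') l)).1) = (if i = i' then rone else 0).1 := by
      rw [← Prod.fst_sum]; exact congrArg Prod.fst (hd i i')
    simp only [rmul] at h1
    rw [apply_ite Prod.fst] at h1
    rw [Matrix.mul_apply, Matrix.one_apply]
    simpa [rone, mul_comm, hAb, hBb] using h1
  have hABvz : Avz * Bvz = 1 := by
    ext i i'
    have h1 : (∑ l, (rmul (α (e i) l) (βm (e i') l)).2.2) = (if i = i' then rone else 0).2.2 := by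
      rw [← Prod.snd_sum, ← Prod.snd_sum]
      exact congrArg (fun x => x.2.2) (hd i i')
    simp only [rmul] at h1
    rw [apply_ite (fun x : ℝ × ℝ × ℤ => x.2.2)] at h1
    rw [Matrix.mul_apply, Matrix.one_apply]
    simpa [rone, mul_comm, hAvz, hBvz] using h1
  have hABc : Ac * Bb + Av * Bc = 0 := by
    ext i i'
    have h1 : (∑ l, (rmul (α (e i) l) (βm (e i') l)).2.1) = (if i = i' then rone else 0).2.1 := by
      rw [← Prod.fst_sum, ← Prod.snd_sum]
      exact congrArg (fun x => x.2.1) (hd i i')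
    simp only [rmul] at h1
    rw [apply_ite (fun x : ℝ × ℝ × ℤ => x.2.1)] at h1
    simp only [rone, Prod.snd_zero, Prod.fst_zero, ite_self] at h1
    rw [Matrix.add_apply, Matrix.mul_apply, Matrix.mul_apply, ← Finset.sum_add_distrib,
      Matrix.zero_apply, ← h1]
    apply Finset.sum_congr rfl
    intro x _
    simp only [hAc, hBb, hAv, hBc]
    ring
  have hBAb : Bb * Ab = 1 := mul_eq_one_comm.mp hABb
  have hBAvz : Bvz * Avz = 1 := mul_eq_one_comm.mp hABvz
  have hmapv : ∀ (M N : Matrix (Fin n) (Fin n) ℤ), M * N = 1 →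
      (M.map (Int.cast : ℤ → ℝ)) * (N.map (Int.cast : ℤ → ℝ)) = 1 := by
    intro M N h
    ext i j
    have h2 := Matrix.ext_iff.2 h i j
    rw [Matrix.mul_apply, Matrix.one_apply] at h2
    rw [Matrix.mul_apply, Matrix.one_apply]
    simp only [Matrix.map_apply]
    have h3 : (∑ x, ((M i x : ℝ) * (N x j : ℝ))) = ((∑ x, M i x * N x j : ℤ) : ℝ) := by
      push_cast; rfl
    rw [h3, h2]
    split <;> simp
  have hAvm : Av = Avz.map (Int.cast : ℤ → ℝ) := rfl
  have hBvm : Bv = Bvz.map (Int.cast : ℤ → ℝ) := rfl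
  have hBAv : Bv * Av = 1 := by rw [hAvm, hBvm]; exact hmapv _ _ hBAvz
  have hAvBc : Av * Bc = -(Ac * Bb) := eq_neg_of_add_eq_zero_right hABc
  have hBAc : Bc * Ab + Bv * Ac = 0 := by
    have h1 : Bc = -(Bv * (Ac * Bb)) := by
      calc Bc = (Bv * Av) * Bc := by rw [hBAv, one_mul]
      _ = Bv * (Av * Bc) := by rw [Matrix.mul_assoc]
      _ = -(Bv * (Ac * Bb)) := by rw [hAvBc, mul_neg]
    rw [h1, neg_mul, Matrix.mul_assoc, Matrix.mul_assoc, hBAb, Matrix.mul_one, neg_add_cancel]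
  have hsum : ∀ f : Fin m → ℝ × ℝ × ℤ, (∑ i ∈ I, f i) = ∑ i : Fin n, f (e i) := by
    intro f
    rw [← Finset.sum_coe_sort I f]
    exact (Equiv.sum_comp e (fun i : {i // i ∈ I} => f (i : Fin m))).symm
  intro j l
  rw [hsum]
  refine Prod.ext ?_ (Prod.ext ?_ ?_)
  · rw [Prod.fst_sum, apply_ite Prod.fst]
    have h2 := Matrix.ext_iff.2 hBAb j l
    rw [Matrix.mul_apply, Matrix.one_apply] at h2
    simp only [rmul, rone, Prod.fst_zero]
    rw [← h2]
    apply Finset.sum_congr rfl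
    intro x _
    simp only [hBb, hAb]
    ring
  · have h2 := Matrix.ext_iff.2 hBAc j l
    rw [Matrix.add_apply, Matrix.mul_apply, Matrix.mul_apply, ← Finset.sum_add_distrib,
      Matrix.zero_apply] at h2
    rw [Prod.snd_sum, Prod.fst_sum, apply_ite (fun x : ℝ × ℝ × ℤ => x.2.1)]
    simp only [rmul, rone, Prod.snd_zero, Prod.fst_zero, ite_self]
    rw [← h2]
    apply Finset.sum_congr rfl
    intro x _
    simp only [hBb, hAb, hBc, hAc, hBv, hAv]
    ring
  · rw [Prod.snd_sum, Prod.snd_sum, apply_ite (fun x : ℝ × ℝ × ℤ => x.2.2)]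
    have h2 := Matrix.ext_iff.2 hBAvz j l
    rw [Matrix.mul_apply, Matrix.one_apply] at h2
    simp only [rmul, rone, Prod.snd_zero]
    rw [← h2]
    apply Finset.sum_congr rfl
    intro x _
    simp only [hBvz, hAvz]
    ring

section Main

variable {n m : ℕ}

lemma phi_split (β αI : Fin m → Fin n → ℝ × ℝ × ℤ) (I : Finset (Fin m))
    (hdual : ∀ i ∈ I, ∀ i' ∈ I, rinner (αI i) (β i') = if i = i' then rone else 0)
    (z : Fin m → ℂ) (i : Fin m) (hi : i ∈ I) :
    phiMap β αI I z ⟨i, hi⟩ = z i * ∏ k ∈ Iᶜ, cpwT (rinner (αI i) (β k)) (z k) := by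
  unfold phiMap
  rw [← Finset.prod_mul_prod_compl I]
  congr 1
  rw [Finset.prod_eq_single_of_mem i hi]
  · rw [hdual i hi i hi, if_pos rfl, cpwT_rone]
  · intro k hk hne
    rw [hdual i hi k hk, if_neg (fun hh => hne (hh.symm)), cpwT_zero_exp]

lemma kernel_prod (β : Fin m → Fin n → ℝ × ℝ × ℤ) (h : Fin m → ℂ)
    (h0 : ∀ k, h k ≠ 0) (hker : lamMap β h = fun _ => 1) (α : Fin n → ℝ × ℝ × ℤ) :
    ∏ k, cpwT (rinner α (β k)) (h k) = 1 := by
  have step1 : ∀ k, cpwT (rinner α (β k)) (h k) =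
      ∏ j, cpwT (α j) (cpwT (β k j) (h k)) := by
    intro k
    rw [rinner, cpwT_sum _ _ (h0 k)]
    exact Finset.prod_congr rfl fun j _ => (cpwT_comp (h0 k) _ _)
  calc ∏ k, cpwT (rinner α (β k)) (h k)
      = ∏ k, ∏ j, cpwT (α j) (cpwT (β k j) (h k)) :=
        Finset.prod_congr rfl fun k _ => step1 k
    _ = ∏ j, ∏ k, cpwT (α j) (cpwT (β k j) (h k)) := Finset.prod_comm
    _ = ∏ j, cpwT (α j) (∏ k, cpwT (β k j) (h k)) := by
        refine Finset.prod_congr rfl fun j _ => ?_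
        rw [cpwT_prod _ _ (fun k _ => cpwT_ne_zero (h0 k) _)]
    _ = 1 := by
        have hj : ∀ j, (∏ k, cpwT (β k j) (h k)) = 1 := fun j => congrFun hker j
        simp only [hj, cpwT_one]
        exact Finset.prod_const_one

lemma key2 (β αI : Fin m → Fin n → ℝ × ℝ × ℤ) (I : Finset (Fin m)) (hcard : I.card = n)
    (hdual : ∀ i ∈ I, ∀ i' ∈ I, rinner (αI i) (β i') = if i = i' then rone else 0) :
    ∀ (k : Fin m) (j : Fin n), (∑ i ∈ I, rmul (β i j) (rinner (αI i) (β k))) = β k j := by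
  have hd := dual_comm I hcard αI β (fun i hi i' hi' => hdual i hi i' hi')
  intro k j
  calc ∑ i ∈ I, rmul (β i j) (rinner (αI i) (β k))
      = ∑ i ∈ I, ∑ l, rmul (rmul (β i j) (αI i l)) (β k l) := by
        refine Finset.sum_congr rfl fun i _ => ?_
        rw [rinner, rmul_sum]
        exact Finset.sum_congr rfl fun l _ => (rmul_assoc _ _ _).symm
    _ = ∑ l, rmul (∑ i ∈ I, rmul (β i j) (αI i l)) (β k l) := by
        rw [Finset.sum_comm]
        exact Finset.sum_congr rfl fun l _ => (sum_rmul _ _ _).symm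
    _ = ∑ l, rmul (if j = l then rone else 0) (β k l) := by
        refine Finset.sum_congr rfl fun l _ => ?_
        rw [hd j l]
    _ = β k j := by
        have hl : ∀ l, rmul (if j = l then rone else 0) (β k l) =
            if j = l then β k l else 0 := by
          intro l; split
          · exact rone_rmul _
          · exact zero_rmul _
        rw [Finset.sum_congr rfl fun l _ => hl l, Finset.sum_ite_eq]
        simp

lemma per_k_mul (β αI : Fin m → Fin n → ℝ × ℝ × ℤ) (I : Finset (Fin m))
    (hdual : ∀ i ∈ I, ∀ i' ∈ I, rinner (αI i) (β i') = if i = i' then rone else 0)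
    (h z : Fin m → ℂ) (h0 : ∀ k, h k ≠ 0) (hz : z ∈ USet I)
    (i : Fin m) (hi : i ∈ I) (k : Fin m) :
    cpwT (rinner (αI i) (β k)) (h k * z k) =
      cpwT (rinner (αI i) (β k)) (h k) * cpwT (rinner (αI i) (β k)) (z k) := by
  by_cases hzk : z k = 0
  · have hkI : k ∈ I := by by_contra hk; exact hz k hk hzk
    rw [hdual i hi k hkI]
    by_cases hik : i = k
    · rw [if_pos hik, cpwT_rone, cpwT_rone, cpwT_rone]
    · rw [if_neg hik, cpwT_zero_exp, cpwT_zero_exp, cpwT_zero_exp, one_mul]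
  · exact cpwT_mul (h0 k) hzk _

end Main

lemma continuousAt_prod' {X : Type*} [TopologicalSpace X] {ι : Type*} (s : Finset ι)
    (f : ι → X → ℂ) (x : X) (h : ∀ k ∈ s, ContinuousAt (f k) x) :
    ContinuousAt (fun y => ∏ k ∈ s, f k y) x := by
  induction s using Finset.cons_induction with
  | empty => simpa using (continuousAt_const : ContinuousAt (fun _ : X => (1:ℂ)) x)
  | cons a s ha ih =>
      simp only [Finset.prod_cons]
      exact (h a (Finset.mem_cons_self a s)).mul
        (ih fun k hk => h k (Finset.mem_cons_of_mem hk))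

lemma factor_contAt {m : ℕ} (t : ℝ × ℝ × ℤ) (k : Fin m) (z : Fin m → ℂ)
    (hcase : z k ≠ 0 ∨ t = rone ∨ t = 0) :
    ContinuousAt (fun y : Fin m → ℂ => cpwT t (y k)) z := by
  rcases hcase with h | h | h
  · exact ContinuousAt.comp (x := z) (cpwT_continuousAt t h) (continuous_apply k).continuousAt
  · have he : (fun y : Fin m → ℂ => cpwT t (y k)) = fun y => y k := by
      funext y; rw [h, cpwT_rone]
    rw [he]; exact (continuous_apply k).continuousAt
  · have he : (fun y : Fin m → ℂ => cpwT t (y k)) = fun _ => 1 := by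
      funext y; rw [h, cpwT_zero_exp]
    rw [he]; exact continuousAt_const

theorem main_thm (β αI : Fin m → Fin n → ℝ × ℝ × ℤ)
    (I : Finset (Fin m)) (hcard : I.card = n)
    (hdual : ∀ i ∈ I, ∀ i' ∈ I, rinner (αI i) (β i') = if i = i' then rone else 0) :
    (∀ h : Fin m → ℂ, (∀ k, h k ≠ 0) → (lamMap β h = fun _ => 1) →
      ∀ z ∈ USet I, phiMap β αI I (fun k => h k * z k) = phiMap β αI I z) ∧
    (∀ z ∈ USet I, ∀ w ∈ USet I,
      (phiMap β αI I z = phiMap β αI I w ↔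
        ∃ h : Fin m → ℂ, (∀ k, h k ≠ 0) ∧ (lamMap β h = fun _ => 1) ∧
          ∀ k, w k = h k * z k)) ∧
    (∀ t : {i // i ∈ I} → ℂ, ∃ z ∈ USet I, phiMap β αI I z = t) ∧
    ContinuousOn (phiMap β αI I) (USet I) ∧
    (∀ s : Set (Fin m → ℂ), s ⊆ USet I → IsOpen s →
      IsOpen (phiMap β αI I '' s)) := by
  classical
  have hPne : ∀ z ∈ USet I, ∀ i : Fin m,
      (∏ k ∈ Iᶜ, cpwT (rinner (αI i) (β k)) (z k)) ≠ 0 := by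
    intro z hz i
    exact Finset.prod_ne_zero_iff.2 fun k hk =>
      cpwT_ne_zero (hz k (Finset.mem_compl.1 hk)) _
  have part1 : ∀ h : Fin m → ℂ, (∀ k, h k ≠ 0) → (lamMap β h = fun _ => 1) →
      ∀ z ∈ USet I, phiMap β αI I (fun k => h k * z k) = phiMap β αI I z := by
    intro h h0 hker z hz
    funext i
    show ∏ k, cpwT (rinner (αI i.1) (β k)) (h k * z k) = _
    calc ∏ k, cpwT (rinner (αI i.1) (β k)) (h k * z k)
        = ∏ k, (cpwT (rinner (αI i.1) (β k)) (h k) *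
            cpwT (rinner (αI i.1) (β k)) (z k)) :=
          Finset.prod_congr rfl fun k _ => per_k_mul β αI I hdual h z h0 hz i.1 i.2 k
      _ = (∏ k, cpwT (rinner (αI i.1) (β k)) (h k)) *
            ∏ k, cpwT (rinner (αI i.1) (β k)) (z k) := Finset.prod_mul_distrib
      _ = ∏ k, cpwT (rinner (αI i.1) (β k)) (z k) := by
          rw [kernel_prod β h h0 hker (αI i.1), one_mul]
  refine ⟨part1, ?_, ?_, ?_, ?_⟩
  · -- part 2
    intro z hz w hw
    constructor
    · intro hphi
      set h : Fin m → ℂ := fun k =>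
        if hk : k ∈ I then ∏ k' ∈ Iᶜ, cpwT (rinner (αI k) (β k')) (z k' / w k')
        else w k / z k with hh
      have hq : ∀ k' ∈ Iᶜ, z k' / w k' ≠ 0 := fun k' hk' =>
        div_ne_zero (hz k' (Finset.mem_compl.1 hk')) (hw k' (Finset.mem_compl.1 hk'))
      have h0 : ∀ k, h k ≠ 0 := by
        intro k
        simp only [hh]
        by_cases hk : k ∈ I
        · rw [dif_pos hk]
          exact Finset.prod_ne_zero_iff.2 fun k' hk' => cpwT_ne_zero (hq k' hk') _
        · rw [dif_neg hk]
          exact div_ne_zero (hw k hk) (hz k hk)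
      have hwh : ∀ k, w k = h k * z k := by
        intro k
        by_cases hk : k ∈ I
        · have hsz := phi_split β αI I hdual z k hk
          have hsw := phi_split β αI I hdual w k hk
          have hphik := congrFun hphi ⟨k, hk⟩
          rw [hsz, hsw] at hphik
          have hsplit : h k = (∏ k' ∈ Iᶜ, cpwT (rinner (αI k) (β k')) (z k')) *
              (∏ k' ∈ Iᶜ, cpwT (rinner (αI k) (β k')) (w k'))⁻¹ := by
            simp only [hh]
            rw [dif_pos hk, ← Finset.prod_inv_distrib, ← Finset.prod_mul_distrib]
            refine Finset.prod_congr rfl fun k' hk' => ?_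
            have hzk' := hz k' (Finset.mem_compl.1 hk')
            have hwk' := hw k' (Finset.mem_compl.1 hk')
            rw [div_eq_mul_inv, cpwT_mul hzk' (inv_ne_zero hwk'), cpwT_inv hwk']
          rw [hsplit]
          field_simp [hPne w hw k]
          linear_combination -hphik
        · show w k = h k * z k
          simp only [hh]
          rw [dif_neg hk, div_mul_cancel₀ _ (hz k hk)]
      refine ⟨h, h0, ?_, hwh⟩
      -- kernel condition
      funext j
      show ∏ k, cpwT (β k j) (h k) = 1
      rw [← Finset.prod_mul_prod_compl I]
      have hfirst : (∏ i ∈ I, cpwT (β i j) (h i)) =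
          ∏ k' ∈ Iᶜ, cpwT (β k' j) (z k' / w k') := by
        calc ∏ i ∈ I, cpwT (β i j) (h i)
            = ∏ i ∈ I, ∏ k' ∈ Iᶜ, cpwT (rmul (β i j) (rinner (αI i) (β k')))
                (z k' / w k') := by
              refine Finset.prod_congr rfl fun i hiI => ?_
              simp only [hh]
              rw [dif_pos hiI, cpwT_prod _ _
                (fun k' hk' => cpwT_ne_zero (hq k' hk') _)]
              exact Finset.prod_congr rfl fun k' hk' => (cpwT_comp (hq k' hk') _ _).symm
          _ = ∏ k' ∈ Iᶜ, ∏ i ∈ I, cpwT (rmul (β i j) (rinner (αI i) (β k')))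
                (z k' / w k') := Finset.prod_comm
          _ = ∏ k' ∈ Iᶜ, cpwT (β k' j) (z k' / w k') := by
              refine Finset.prod_congr rfl fun k' hk' => ?_
              rw [← cpwT_sum _ _ (hq k' hk'), key2 β αI I hcard hdual k' j]
      rw [hfirst, ← Finset.prod_mul_distrib]
      rw [Finset.prod_congr rfl (fun k hk => ?_), Finset.prod_const_one]
      have hzk := hz k (Finset.mem_compl.1 hk)
      have hwk := hw k (Finset.mem_compl.1 hk)
      have hh1 : h k = w k / z k := by
        simp only [hh]
        rw [dif_neg (Finset.mem_compl.1 hk)]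
      rw [hh1, ← cpwT_mul (div_ne_zero hzk hwk) (div_ne_zero hwk hzk),
        div_mul_div_comm, mul_comm (z k), div_self (mul_ne_zero hwk hzk), cpwT_one]
    · rintro ⟨h, h0, hker, hwh⟩
      have : w = fun k => h k * z k := funext fun k => hwh k
      rw [this, part1 h h0 hker z hz]
  · -- part 3
    intro t
    refine ⟨fun k => if hk : k ∈ I then t ⟨k, hk⟩ else 1, fun k hk => by
      beta_reduce; rw [dif_neg hk]; exact one_ne_zero, ?_⟩
    funext i
    obtain ⟨iv, hiv⟩ := i
    rw [phi_split β αI I hdual _ iv hiv]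
    rw [dif_pos hiv]
    rw [Finset.prod_congr rfl (fun k hk => ?_), Finset.prod_const_one, mul_one]
    beta_reduce
    rw [dif_neg (Finset.mem_compl.1 hk), cpwT_one]
  · -- part 4 : continuity
    intro z hz
    apply ContinuousAt.continuousWithinAt
    rw [continuousAt_pi]
    intro i
    show ContinuousAt (fun y : Fin m → ℂ => ∏ k, cpwT (rinner (αI i.1) (β k)) (y k)) z
    refine continuousAt_prod' _ _ _ fun k _ => ?_
    refine factor_contAt _ _ _ ?_
    by_cases hzk : z k = 0
    · have hkI : k ∈ I := by by_contra hk; exact hz k hk hzk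
      right
      rw [hdual i.1 i.2 k hkI]
      by_cases hik : i.1 = k
      · left; rw [if_pos hik]
      · right; rw [if_neg hik]
    · exact Or.inl hzk
  · -- part 5 : openness
    intro s hsub hopen
    set Ψ : (Fin m → ℂ) → (Fin m → ℂ) := fun z k =>
      if k ∈ I then z k * ∏ k' ∈ Iᶜ, cpwT (rinner (αI k) (β k')) (z k') else z k with hΨ
    set Θ : (Fin m → ℂ) → (Fin m → ℂ) := fun w k =>
      if k ∈ I then w k * (∏ k' ∈ Iᶜ, cpwT (rinner (αI k) (β k')) (w k'))⁻¹ else w k with hΘ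
    have hUopen : IsOpen (USet I) := by
      have he : USet I = ⋂ k ∈ (Iᶜ : Finset (Fin m)),
          (fun z : Fin m → ℂ => z k) ⁻¹' {(0:ℂ)}ᶜ := by
        ext z
        simp [USet, Finset.mem_compl]
      rw [he]
      exact isOpen_biInter_finset fun k _ =>
        IsOpen.preimage (continuous_apply k) isOpen_compl_singleton
    have hΨout : ∀ z k, k ∉ I → Ψ z k = z k := by
      intro z k hk; simp only [hΨ]; rw [if_neg hk]
    have hΘout : ∀ w k, k ∉ I → Θ w k = w k := by
      intro w k hk; simp only [hΘ]; rw [if_neg hk]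
    have hPcongr : ∀ (i : Fin m) (z w : Fin m → ℂ), (∀ k ∉ I, z k = w k) →
        (∏ k' ∈ Iᶜ, cpwT (rinner (αI i) (β k')) (z k')) =
          ∏ k' ∈ Iᶜ, cpwT (rinner (αI i) (β k')) (w k') := by
      intro i z w hzw
      exact Finset.prod_congr rfl fun k' hk' => by
        rw [hzw k' (Finset.mem_compl.1 hk')]
    have hΨU : ∀ z ∈ USet I, Ψ z ∈ USet I := by
      intro z hzU k hk; rw [hΨout z k hk]; exact hzU k hk
    have hΘU : ∀ w ∈ USet I, Θ w ∈ USet I := by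
      intro w hwU k hk; rw [hΘout w k hk]; exact hwU k hk
    have hΘΨ : ∀ z ∈ USet I, Θ (Ψ z) = z := by
      intro z hzU
      funext k
      by_cases hk : k ∈ I
      · simp only [hΘ]
        rw [if_pos hk, hPcongr k (Ψ z) z (fun k' hk' => hΨout z k' hk')]
        simp only [hΨ]
        rw [if_pos hk, mul_assoc, mul_inv_cancel₀ (hPne z hzU k), mul_one]
      · rw [hΘout _ k hk, hΨout z k hk]
    have hΨΘ : ∀ w ∈ USet I, Ψ (Θ w) = w := by
      intro w hwU
      funext k
      by_cases hk : k ∈ I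
      · simp only [hΨ]
        rw [if_pos hk, hPcongr k (Θ w) w (fun k' hk' => hΘout w k' hk')]
        simp only [hΘ]
        rw [if_pos hk, mul_assoc, inv_mul_cancel₀ (hPne w hwU k), mul_one]
      · rw [hΨout _ k hk, hΘout w k hk]
    have hΘcont : ContinuousOn Θ (USet I) := by
      rw [continuousOn_pi]
      intro k
      by_cases hk : k ∈ I
      · intro w hwU
        apply ContinuousAt.continuousWithinAt
        have he : (fun w : Fin m → ℂ => Θ w k) = fun w =>
            w k * (∏ k' ∈ Iᶜ, cpwT (rinner (αI k) (β k')) (w k'))⁻¹ := by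
          funext w; simp only [hΘ]; rw [if_pos hk]
        rw [he]
        refine (continuous_apply k).continuousAt.mul (ContinuousAt.inv₀ ?_ (hPne w hwU k))
        exact continuousAt_prod' _ _ _ fun k' hk' =>
          factor_contAt _ _ _ (Or.inl (hwU k' (Finset.mem_compl.1 hk')))
      · intro w hwU
        apply ContinuousAt.continuousWithinAt
        have he : (fun w : Fin m → ℂ => Θ w k) = fun w => w k := by
          funext w; exact hΘout w k hk
        rw [he]
        exact (continuous_apply k).continuousAt
    have himg : Ψ '' s = USet I ∩ Θ ⁻¹' s := by
      ext w
      constructor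
      · rintro ⟨z, hzs, rfl⟩
        have hzU := hsub hzs
        exact ⟨hΨU z hzU, by rw [Set.mem_preimage, hΘΨ z hzU]; exact hzs⟩
      · rintro ⟨hwU, hws⟩
        exact ⟨Θ w, hws, hΨΘ w hwU⟩
    have hΨs_open : IsOpen (Ψ '' s) := by
      rw [himg]
      exact hΘcont.isOpen_inter_preimage hUopen hopen
    set R : (Fin m → ℂ) → ({i // i ∈ I} → ℂ) := fun f => fun i => f i.1 with hR
    have hphiR : ∀ z ∈ s, phiMap β αI I z = R (Ψ z) := by
      intro z hzs
      funext i
      obtain ⟨iv, hiv⟩ := i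
      rw [phi_split β αI I hdual z iv hiv]
      simp only [hR, hΨ]
      rw [if_pos hiv]
    have himg2 : phiMap β αI I '' s = R '' (Ψ '' s) := by
      rw [← Set.image_comp]
      exact Set.image_congr hphiR
    have hRopen : IsOpenMap R := by
      have he : R = Prod.fst ∘
          (Homeomorph.piEquivPiSubtypeProd (fun k : Fin m => k ∈ I) (fun _ => ℂ)) := rfl
      rw [he]
      exact isOpenMap_fst.comp (Homeomorph.piEquivPiSubtypeProd _ _).isOpenMap
    rw [himg2]
    exact hRopen _ hΨs_open


/-- for `I ∈ Σ` with `|I| = n` and dual set `{αᵢᴵ}` of `{βᵢ}ᵢ∈I`, the map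
`φ̃_I : U(I) → ℂᴵ` is invariant under `Ker λ`, and it induces a bijection — indeed a
homeomorphism — `U(I)/Ker λ → ℂᴵ` (constancy exactly on `Ker λ`-orbits, surjectivity,
continuity, and openness on relatively open subsets of `U(I)`). -/
theorem phi_invariant_and_induces_homeo (n m : ℕ) (Δ : CompleteNonsingularTopFan n m)
    (I : Finset (Fin m)) (hI : I ∈ Δ.cx) (hcard : I.card = n)
    (αI : Fin m → Fin n → ℝ × ℝ × ℤ)
    (hdual : ∀ i ∈ I, ∀ i' ∈ I, rinner (αI i) (Δ.β i') = if i = i' then rone else 0) :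
    (∀ h : Fin m → ℂ, (∀ k, h k ≠ 0) → (lamMap Δ.β h = fun _ => 1) →
      ∀ z ∈ USet I, phiMap Δ.β αI I (fun k => h k * z k) = phiMap Δ.β αI I z) ∧
    (∀ z ∈ USet I, ∀ w ∈ USet I,
      (phiMap Δ.β αI I z = phiMap Δ.β αI I w ↔
        ∃ h : Fin m → ℂ, (∀ k, h k ≠ 0) ∧ (lamMap Δ.β h = fun _ => 1) ∧
          ∀ k, w k = h k * z k)) ∧
    (∀ t : {i // i ∈ I} → ℂ, ∃ z ∈ USet I, phiMap Δ.β αI I z = t) ∧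
    ContinuousOn (phiMap Δ.β αI I) (USet I) ∧
    (∀ s : Set (Fin m → ℂ), s ⊆ USet I → IsOpen s →
      IsOpen (phiMap Δ.β αI I '' s)) := by
  exact main_thm Δ.β αI I hcard hdual
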